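/- arXiv:math/0506431 — 2 statements merged into one kernel-verified Lean document; each statement's English description precedes it below -/
import Mathlib

section
/- Let P and Q be two probability measures on a measurable space, mutually absolutely continuous, and let E be an event with Q(E) > 0. Then log(P(E)/Q(E)) ≥ -(1/Q(E)) * (H(Q|P) + 1/e), where H(Q|P) = ∫ (dQ/dP) log(dQ/dP) dP is the relative entropy of Q with respect to P. -/
open MeasureTheory

lemma aux_log_le_div_exp {t : ℝ} (ht : 0 < t) : Real.log t ≤ t / Real.exp 1 := by
  have h1 : Real.log (t / Real.exp 1) ≤ t / Real.exp 1 - 1 :=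
    Real.log_le_sub_one_of_pos (by positivity)
  have h2 : Real.log (t / Real.exp 1) = Real.log t - 1 := by
    rw [Real.log_div (ne_of_gt ht) (by positivity), Real.log_exp]
  linarith [h2 ▸ h1]

lemma aux_mul_log_ge {x : ℝ} (hx : 0 ≤ x) : x * Real.log x ≥ -(1 / Real.exp 1) := by
  rcases eq_or_lt_of_le hx with h | h
  · simp [← h]
    positivity
  · have h1 : Real.log (1 / x) ≤ (1 / x) / Real.exp 1 := aux_log_le_div_exp (by positivity)
    have h2 : Real.log (1 / x) = -Real.log x := by
      rw [one_div, Real.log_inv]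
    have he : (0:ℝ) < Real.exp 1 := Real.exp_pos 1
    rw [h2] at h1
    have := mul_le_mul_of_nonneg_left h1 hx
    have hxx : x * ((1 / x) / Real.exp 1) = 1 / Real.exp 1 := by
      field_simp
    nlinarith

lemma aux_tangent {x c : ℝ} (hx : 0 ≤ x) (hc : 0 < c) :
    x * (Real.log c + 1) - c ≤ x * Real.log x := by
  rcases eq_or_lt_of_le hx with h | h
  · simp [← h]
    linarith
  · have h1 : Real.log (c / x) ≤ c / x - 1 := Real.log_le_sub_one_of_pos (by positivity)
    have h2 : Real.log (c / x) = Real.log c - Real.log x :=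
      Real.log_div (ne_of_gt hc) (ne_of_gt h)
    rw [h2] at h1
    have := mul_le_mul_of_nonneg_left h1 h.le
    have hxx : x * (c / x) = c := by field_simp
    nlinarith

theorem stmt_1 {Ω : Type*} [MeasurableSpace Ω]
    (P Q : Measure Ω) [IsProbabilityMeasure P] [IsProbabilityMeasure Q]
    (hPQ : P ≪ Q) (hQP : Q ≪ P)
    (E : Set Ω) (hE : MeasurableSet E) (hQE : 0 < (Q E).toReal)
    (H : ℝ)
    (hH : H = ∫ x, (Q.rnDeriv P x).toReal * Real.log (Q.rnDeriv P x).toReal ∂P)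
    (hint : Integrable (fun x => (Q.rnDeriv P x).toReal * Real.log (Q.rnDeriv P x).toReal) P) :
    Real.log ((P E).toReal / (Q E).toReal) ≥
      -(1 / (Q E).toReal) * (H + 1 / Real.exp 1) := by
  set g : Ω → ℝ := fun x => (Q.rnDeriv P x).toReal with hg
  have hQE0 : Q E ≠ 0 := by
    intro h; rw [h] at hQE; simp at hQE
  have hPE0 : P E ≠ 0 := fun h => hQE0 (hQP h)
  have hPEpos : 0 < (P E).toReal :=
    ENNReal.toReal_pos hPE0 (measure_ne_top P E)
  set q := (Q E).toReal with hq
  set p := (P E).toReal with hp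
  set c := q / p with hcdef
  have hcpos : 0 < c := div_pos hQE hPEpos
  -- integral of g over E
  have hgE : ∫ x in E, g x ∂P = q := Measure.setIntegral_toReal_rnDeriv hQP E
  have hgint : Integrable g P := Measure.integrable_toReal_rnDeriv
  -- lower bound on E
  have hlbE : ∫ x in E, (g x * (Real.log c + 1) - c) ∂P ≤
      ∫ x in E, g x * Real.log (g x) ∂P := by
    apply setIntegral_mono_on
    · exact ((hgint.mul_const _).sub (integrable_const c)).integrableOn
    · exact hint.integrableOn
    · exact hE
    · intro x _
      exact aux_tangent ENNReal.toReal_nonneg hcpos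
  have hcompE : ∫ x in E, (g x * (Real.log c + 1) - c) ∂P = q * Real.log c := by
    rw [integral_sub ((hgint.mul_const _).integrableOn) (integrable_const c).integrableOn,
      integral_mul_const, hgE, setIntegral_const, Measure.real]
    have hPE : (P E).toReal = p := rfl
    have : (P E).toReal • c = p * c := by rw [hPE, smul_eq_mul]
    rw [this, hcdef]
    field_simp
    ring
  -- lower bound on Eᶜ
  have hlbC : ∫ x in Eᶜ, (-(1 / Real.exp 1)) ∂P ≤
      ∫ x in Eᶜ, g x * Real.log (g x) ∂P := by
    apply setIntegral_mono_on
    · exact (integrable_const _).integrableOn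
    · exact hint.integrableOn
    · exact hE.compl
    · intro x _
      exact aux_mul_log_ge ENNReal.toReal_nonneg
  have hcompC : ∫ x in Eᶜ, (-(1 / Real.exp 1)) ∂P ≥ -(1 / Real.exp 1) := by
    rw [setIntegral_const, smul_eq_mul, Measure.real]
    have h1 : (P Eᶜ).toReal ≤ 1 := by
      have hle := prob_le_one (μ := P) (s := Eᶜ)
      calc (P Eᶜ).toReal ≤ (1 : ENNReal).toReal := ENNReal.toReal_mono (by simp) hle
        _ = 1 := by simp
    have h0 : 0 ≤ (P Eᶜ).toReal := ENNReal.toReal_nonneg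
    have he : (0:ℝ) < 1 / Real.exp 1 := by positivity
    nlinarith
  -- combine
  have hsplit : ∫ x in E, g x * Real.log (g x) ∂P + ∫ x in Eᶜ, g x * Real.log (g x) ∂P = H := by
    rw [hH]; exact integral_add_compl hE hint
  have hkey : q * Real.log c ≤ H + 1 / Real.exp 1 := by
    have := hlbE
    have := hlbC
    have := hcompE
    have := hcompC
    linarith
  -- finish
  have hlogc : Real.log c = Real.log q - Real.log p := Real.log_div (ne_of_gt hQE) (ne_of_gt hPEpos)
  have hlogpq : Real.log (p / q) = Real.log p - Real.log q := Real.log_div (ne_of_gt hPEpos) (ne_of_gt hQE)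
  rw [ge_iff_le, neg_mul, neg_le, hlogpq]
  rw [hlogc] at hkey
  rw [div_mul_eq_mul_div, le_div_iff₀ hQE]
  nlinarith
end

section
/- Let K : ℕ → [0,∞) with ∑_{n≥1} K(n) ≤ 1 and Σ := ∑_{n≥1} n K(n) < ∞, Σ > 0. Define F(h) for h < h_c := log(∑_{n≥1} K(n)) as the unique b > 0 solving ∑ K(n) e^{-bn} = e^h, and F(h) = 0 for h ≥ h_c. Then F(h) = (e^{h_c}/Σ)(h_c - h) + o(h_c - h) as h ↑ h_c; in particular the right derivative of -F at h_c exists and equals e^{h_c}/Σ > 0, so the transition is of first order. -/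
open Filter

theorem stmt_8 (K : ℕ → ℝ) (hK : ∀ n, 0 ≤ K n)
    (hsum : Summable (fun n : ℕ => K (n + 1)))
    (hle : ∑' n : ℕ, K (n + 1) ≤ 1)
    (hmean : Summable (fun n : ℕ => ((n : ℝ) + 1) * K (n + 1)))
    (Sig : ℝ) (hSig : Sig = ∑' n : ℕ, ((n : ℝ) + 1) * K (n + 1)) (hSigpos : 0 < Sig)
    (h_c : ℝ) (hhc : h_c = Real.log (∑' n : ℕ, K (n + 1)))
    (F : ℝ → ℝ)
    (hF : ∀ h < h_c, 0 < F h ∧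
        ∑' n : ℕ, K (n + 1) * Real.exp (-(F h) * (n + 1)) = Real.exp h)
    (hF0 : ∀ h ≥ h_c, F h = 0) :
    Tendsto (fun h => F h / (h_c - h)) (nhdsWithin h_c (Set.Iio h_c))
      (nhds (Real.exp h_c / Sig)) := by
  -- basic setup
  set g : ℝ → ℝ := fun b => ∑' n : ℕ, K (n + 1) * Real.exp (-b * (n + 1)) with hg
  -- there is a positive term
  have hex : ∃ n0 : ℕ, 0 < K (n0 + 1) := by
    by_contra hcon
    push_neg at hcon
    have hz : ∀ n : ℕ, ((n : ℝ) + 1) * K (n + 1) = 0 := by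
      intro n
      have := le_antisymm (hcon n) (hK (n + 1))
      rw [this, mul_zero]
    rw [hSig] at hSigpos
    rw [tsum_congr hz, tsum_zero] at hSigpos
    exact lt_irrefl 0 hSigpos
  obtain ⟨n0, hn0⟩ := hex
  -- summability of g's terms
  have hgsummable : ∀ b : ℝ, 0 ≤ b → Summable (fun n : ℕ => K (n + 1) * Real.exp (-b * (n + 1))) := by
    intro b hb
    apply Summable.of_nonneg_of_le (fun n => mul_nonneg (hK _) (Real.exp_pos _).le) _ hsum
    intro n
    have h1 : Real.exp (-b * (n + 1)) ≤ 1 := by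
      rw [Real.exp_le_one_iff]
      have : (0:ℝ) ≤ (n:ℝ) + 1 := by positivity
      nlinarith
    calc K (n + 1) * Real.exp (-b * (n + 1)) ≤ K (n + 1) * 1 :=
          mul_le_mul_of_nonneg_left h1 (hK (n + 1))
      _ = K (n + 1) := mul_one _
  -- g 0 = S
  have hg0 : g 0 = ∑' n : ℕ, K (n + 1) := by
    apply tsum_congr
    intro n
    simp
  -- S positive
  have hSpos : 0 < ∑' n : ℕ, K (n + 1) := by
    have h1 : 0 < K (n0 + 1) := hn0
    calc (0:ℝ) < K (n0 + 1) := h1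
      _ ≤ ∑' n : ℕ, K (n + 1) := Summable.le_tsum hsum n0 (fun m _ => hK (m + 1))
  -- g positive on nonneg
  have hgpos : ∀ b : ℝ, 0 ≤ b → 0 < g b := by
    intro b hb
    have hterm : 0 < K (n0 + 1) * Real.exp (-b * (n0 + 1)) := by positivity
    calc (0:ℝ) < K (n0 + 1) * Real.exp (-b * (n0 + 1)) := hterm
      _ ≤ g b := Summable.le_tsum (hgsummable b hb) n0
        (fun m _ => mul_nonneg (hK _) (Real.exp_pos _).le)
  -- strict antitonicity of g (at pairs with b1 < b2, 0 ≤ b1)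
  have hganti : ∀ b1 b2 : ℝ, 0 ≤ b1 → b1 < b2 → g b2 < g b1 := by
    intro b1 b2 hb1 hlt
    apply Summable.tsum_lt_tsum_of_nonneg (i := n0)
    · intro n; exact mul_nonneg (hK _) (Real.exp_pos _).le
    · intro n
      apply mul_le_mul_of_nonneg_left _ (hK (n + 1))
      apply Real.exp_le_exp.2
      have : (0:ℝ) < (n:ℝ) + 1 := by positivity
      nlinarith
    · apply mul_lt_mul_of_pos_left _ hn0
      apply Real.exp_lt_exp.2
      have : (0:ℝ) < (n0:ℝ) + 1 := by positivity
      nlinarith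
    · exact hgsummable b1 hb1
  -- dominated convergence: (g 0 - g b)/b → Sig as b → 0+
  have hDCT : Tendsto (fun b : ℝ => ∑' n : ℕ,
      K (n + 1) * (1 - Real.exp (-b * (n + 1))) / b)
      (nhdsWithin 0 (Set.Ioi 0)) (nhds Sig) := by
    rw [hSig]
    apply tendsto_tsum_of_dominated_convergence
      (bound := fun n : ℕ => ((n : ℝ) + 1) * K (n + 1)) hmean
    · intro n
      -- pointwise limit: K(n+1) * (1 - exp(-b(n+1)))/b → (n+1) K(n+1)
      have hd : HasDerivAt (fun b : ℝ => Real.exp (-b * ((n:ℝ) + 1)))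
          (-((n:ℝ)+1) * Real.exp (-(0:ℝ) * ((n:ℝ)+1))) 0 := by
        have h1 : HasDerivAt (fun b : ℝ => -b * ((n:ℝ) + 1)) (-((n:ℝ)+1)) 0 := by
          simpa using ((hasDerivAt_id (0:ℝ)).neg.mul_const ((n:ℝ)+1))
        simpa [mul_comm] using h1.exp
      have hslope := hasDerivAt_iff_tendsto_slope.1 hd
      have hsub : nhdsWithin (0:ℝ) (Set.Ioi 0) ≤ nhdsWithin 0 {(0:ℝ)}ᶜ := by
        apply nhdsWithin_mono
        intro x hx
        exact ne_of_gt hx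
      have hslope2 := hslope.mono_left hsub
      have heq : ∀ b ∈ Set.Ioi (0:ℝ),
          K (n + 1) * (1 - Real.exp (-b * ((n:ℝ) + 1))) / b =
          K (n + 1) * (-(slope (fun b : ℝ => Real.exp (-b * ((n:ℝ) + 1))) 0 b)) := by
        intro b hb
        have hb0 : b ≠ 0 := ne_of_gt hb
        rw [slope_def_field]
        field_simp
        simp only [mul_zero, neg_zero, Real.exp_zero, sub_zero]
        ring
      have hlim : Tendsto (fun b : ℝ =>
          K (n + 1) * (-(slope (fun b : ℝ => Real.exp (-b * ((n:ℝ) + 1))) 0 b)))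
          (nhdsWithin 0 (Set.Ioi 0))
          (nhds (K (n + 1) * ((n:ℝ)+1))) := by
        have := (hslope2.neg).const_mul (K (n + 1))
        simpa using this
      have := hlim.congr' (by
        filter_upwards [self_mem_nhdsWithin] with b hb
        exact (heq b hb).symm)
      convert this using 2
      ring
    · -- bound
      filter_upwards [self_mem_nhdsWithin] with b hb n
      have hb0 : (0:ℝ) < b := hb
      have hc : (0:ℝ) < (n:ℝ) + 1 := by positivity
      have hx : (0:ℝ) ≤ b * ((n:ℝ) + 1) := by positivity
      have h1 : 1 - Real.exp (-b * ((n:ℝ)+1)) ≤ b * ((n:ℝ)+1) := by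
        have h := Real.add_one_le_exp (-(b * ((n:ℝ)+1)))
        rw [← neg_mul] at h
        linarith
      have h2 : 0 ≤ 1 - Real.exp (-b * ((n:ℝ)+1)) := by
        have : Real.exp (-b * ((n:ℝ)+1)) ≤ 1 := by
          rw [Real.exp_le_one_iff]; nlinarith
        linarith
      rw [Real.norm_eq_abs, abs_div, abs_of_pos hb0,
        abs_of_nonneg (mul_nonneg (hK _) h2)]
      rw [div_le_iff₀ hb0]
      have := hK (n + 1)
      nlinarith
  -- rewrite DCT as (g 0 - g b)/b → Sig
  have hDCT2 : Tendsto (fun b : ℝ => (g 0 - g b) / b)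
      (nhdsWithin 0 (Set.Ioi 0)) (nhds Sig) := by
    apply hDCT.congr'
    filter_upwards [self_mem_nhdsWithin] with b hb
    have hb0 : (0:ℝ) < b := hb
    have hsumb := hgsummable b (le_of_lt hb0)
    have h1 : ∑' n : ℕ, K (n + 1) * (1 - Real.exp (-b * (n + 1))) / b =
        (∑' n : ℕ, (K (n + 1) - K (n + 1) * Real.exp (-b * (n + 1)))) / b := by
      rw [← tsum_div_const]
      apply tsum_congr
      intro n
      ring_nf
    rw [h1, Summable.tsum_sub hsum hsumb, hg]
    simp [hg0]
  -- g b → g 0 as b → 0+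
  have hgcont : Tendsto g (nhdsWithin 0 (Set.Ioi 0)) (nhds (g 0)) := by
    have hbb : Tendsto (fun b : ℝ => b) (nhdsWithin (0:ℝ) (Set.Ioi 0)) (nhds 0) :=
      tendsto_id.mono_left nhdsWithin_le_nhds
    have := hDCT2.mul hbb
    have h2 : Tendsto (fun b : ℝ => g 0 - (g 0 - g b) / b * b)
        (nhdsWithin 0 (Set.Ioi 0)) (nhds (g 0 - Sig * 0)) :=
      tendsto_const_nhds.sub this
    simp only [mul_zero, sub_zero] at h2
    apply h2.congr'
    filter_upwards [self_mem_nhdsWithin] with b hb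
    have hb0 : b ≠ 0 := ne_of_gt hb
    field_simp
    ring
  -- g b tends to g 0 within the punctured neighborhood (values < g 0)
  have hgne : Tendsto g (nhdsWithin 0 (Set.Ioi 0)) (nhdsWithin (g 0) {(g 0)}ᶜ) := by
    rw [tendsto_nhdsWithin_iff]
    refine ⟨hgcont, ?_⟩
    filter_upwards [self_mem_nhdsWithin] with b hb
    exact ne_of_lt (hganti 0 b le_rfl hb)
  -- slope of log at g 0
  have hg0pos : 0 < g 0 := hgpos 0 le_rfl
  have hlogslope : Tendsto (fun t : ℝ => (Real.log t - Real.log (g 0)) / (t - g 0))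
      (nhdsWithin (g 0) {(g 0)}ᶜ) (nhds (g 0)⁻¹) := by
    have hd := Real.hasDerivAt_log (ne_of_gt hg0pos)
    have := hasDerivAt_iff_tendsto_slope.1 hd
    apply this.congr
    intro t
    rw [slope_def_field]
  -- combine: (log (g 0) - log (g b))/b → Sig / g 0
  have hlogDCT : Tendsto (fun b : ℝ => (Real.log (g 0) - Real.log (g b)) / b)
      (nhdsWithin 0 (Set.Ioi 0)) (nhds (Sig / g 0)) := by
    have hcomp : Tendsto (fun b : ℝ =>
        (Real.log (g b) - Real.log (g 0)) / (g b - g 0))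
        (nhdsWithin 0 (Set.Ioi 0)) (nhds (g 0)⁻¹) := hlogslope.comp hgne
    have hmul := hDCT2.mul hcomp
    have heq : ∀ᶠ b in nhdsWithin (0:ℝ) (Set.Ioi 0),
        (g 0 - g b) / b * ((Real.log (g b) - Real.log (g 0)) / (g b - g 0)) =
        (Real.log (g 0) - Real.log (g b)) / b := by
      filter_upwards [self_mem_nhdsWithin] with b hb
      have hb0 : b ≠ 0 := ne_of_gt hb
      have hne : g b - g 0 ≠ 0 := sub_ne_zero.2 (ne_of_lt (hganti 0 b le_rfl hb))
      field_simp
      ring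
    have := hmul.congr' heq
    convert this using 2
    exact div_eq_mul_inv _ _
  -- invert: b / (log (g 0) - log (g b)) → g 0 / Sig
  have hSigg0 : Sig / g 0 ≠ 0 := by positivity
  have hinv : Tendsto (fun b : ℝ => b / (Real.log (g 0) - Real.log (g b)))
      (nhdsWithin 0 (Set.Ioi 0)) (nhds (g 0 / Sig)) := by
    have := hlogDCT.inv₀ hSigg0
    rw [inv_div] at this
    apply this.congr
    intro b
    rw [inv_div]
  -- F tends to 0 from the right as h → h_c-
  have hFcont : Tendsto F (nhdsWithin h_c (Set.Iio h_c)) (nhdsWithin 0 (Set.Ioi 0)) := by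
    rw [tendsto_nhdsWithin_iff]
    constructor
    · rw [tendsto_order]
      constructor
      · intro a ha
        filter_upwards [self_mem_nhdsWithin] with h hh
        exact lt_trans ha (hF h hh).1
      · intro a ha
        -- show eventually F h < a
        have hga : g a < g 0 := hganti 0 a le_rfl ha
        have hgapos : 0 < g a := hgpos a (le_of_lt ha)
        have hloga : Real.log (g a) < h_c := by
          rw [hhc, ← hg0]
          exact Real.log_lt_log hgapos hga
        have hmem : Set.Ioo (Real.log (g a)) h_c ∈ nhdsWithin h_c (Set.Iio h_c) := by
          apply mem_nhdsWithin.2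
          exact ⟨Set.Ioi (Real.log (g a)), isOpen_Ioi, hloga, by
            intro x hx
            exact ⟨hx.1, hx.2⟩⟩
        filter_upwards [hmem] with h hh
        by_contra hcon
        push_neg at hcon
        have h1 : g (F h) ≤ g a := by
          rcases eq_or_lt_of_le hcon with heq | hlt
          · rw [← heq]
          · exact le_of_lt (hganti a (F h) (le_of_lt ha) hlt)
        have h2 : g (F h) = Real.exp h := (hF h hh.2).2
        have h3 : g a < Real.exp h := by
          calc g a = Real.exp (Real.log (g a)) := (Real.exp_log hgapos).symm
            _ < Real.exp h := Real.exp_lt_exp.2 hh.1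
        linarith
    · filter_upwards [self_mem_nhdsWithin] with h hh
      exact (hF h hh).1
  -- final composition
  have hfinal := hinv.comp hFcont
  have hg0exp : g 0 = Real.exp h_c := by
    rw [hg0, hhc, Real.exp_log hSpos]
  rw [show g 0 / Sig = Real.exp h_c / Sig from by rw [hg0exp]] at hfinal
  apply hfinal.congr'
  filter_upwards [self_mem_nhdsWithin] with h hh
  have h2 : g (F h) = Real.exp h := (hF h hh).2
  have hlogF : Real.log (g (F h)) = h := by
    rw [h2, Real.log_exp]
  show F h / (Real.log (g 0) - Real.log (g (F h))) = F h / (h_c - h)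
  rw [hlogF, hg0, ← hhc]
end
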